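/- Let n = n_1 n_2 and let A ⊆ Z/nZ, A_1 ⊆ Z/n_1Z, A_2 ⊆ Z/n_2Z be nonempty sets such that the image of A under the natural map Z/nZ → Z/n_iZ is contained in A_i for i = 1, 2. Then D_A(Z/nZ) ≥ D_{A_1}(Z/n_1Z) + D_{A_2}(Z/n_2Z) − 1. -/

import Mathlib

open Finset

open scoped Classical

/-- `Tset n` is the set of cubes of units in `ZMod n`. -/
def Tset (n : ℕ) : Set (ZMod n) := {x | ∃ u : (ZMod n)ˣ, ((u : ZMod n)) ^ 3 = x}

/-- A family `x : ι → ZMod n` has a nonempty `A`-weighted zero-sum subsequence. -/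
def HasWZS {n : ℕ} {ι : Type} (A : Set (ZMod n)) (x : ι → ZMod n) : Prop :=
  ∃ I : Finset ι, I.Nonempty ∧ ∃ a : ι → ZMod n, (∀ i ∈ I, a i ∈ A) ∧ ∑ i ∈ I, a i * x i = 0

/-- The weighted Davenport constant `D_A(ZMod n)`. -/
noncomputable def DavA (n : ℕ) (A : Set (ZMod n)) : ℕ :=
  sInf {ℓ : ℕ | 0 < ℓ ∧ ∀ x : Fin ℓ → ZMod n, HasWZS A x}

/-- A family has an `A`-weighted zero-sum subsequence of length exactly `m`. -/
def HasWZSLen {n : ℕ} {ι : Type} (A : Set (ZMod n)) (x : ι → ZMod n) (m : ℕ) : Prop :=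
  ∃ I : Finset ι, I.card = m ∧ ∃ a : ι → ZMod n, (∀ i ∈ I, a i ∈ A) ∧ ∑ i ∈ I, a i * x i = 0

/-- The constant `E_A(ZMod n)`. -/
noncomputable def EA (n : ℕ) (A : Set (ZMod n)) : ℕ :=
  sInf {ℓ : ℕ | 0 < ℓ ∧ ∀ x : Fin ℓ → ZMod n, HasWZSLen A x n}

/-- An `A`-extremal sequence: length `D_A - 1` with no nonempty `A`-weighted zero-sum
subsequence. -/
def IsExtremal {n : ℕ} {ι : Type} [Fintype ι] (A : Set (ZMod n)) (x : ι → ZMod n) : Prop :=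
  Fintype.card ι + 1 = DavA n A ∧ ¬ HasWZS A x

/-- `Omega n` is the number of prime factors of `n` counted with multiplicity. -/
def Omega (n : ℕ) : ℕ := n.primeFactorsList.length

private lemma hasWZS_comp {n : ℕ} {ι κ : Type} {A : Set (ZMod n)} {x : κ → ZMod n}
    (f : ι → κ) (hf : Function.Injective f) (hc : HasWZS A (x ∘ f)) : HasWZS A x := by
  classical
  obtain ⟨I, hne, a, ha, hs⟩ := hc
  set a' : κ → ZMod n := fun j => if hj : ∃ i, i ∈ I ∧ f i = j then a hj.choose else 0 with ha'
  have key : ∀ i ∈ I, a' (f i) = a i := by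
    intro i hi
    have hj : ∃ i', i' ∈ I ∧ f i' = f i := ⟨i, hi, rfl⟩
    simp only [a', dif_pos hj]
    rw [hf hj.choose_spec.2]
  refine ⟨I.map ⟨f, hf⟩, hne.map, a', ?_, ?_⟩
  · intro j hj
    simp only [Finset.mem_map, Function.Embedding.coeFn_mk] at hj
    obtain ⟨i, hi, rfl⟩ := hj
    rw [key i hi]; exact ha i hi
  · rw [Finset.sum_map]
    simp only [Function.Embedding.coeFn_mk]
    calc ∑ i ∈ I, a' (f i) * x (f i) = ∑ i ∈ I, a i * (x ∘ f) i :=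
          Finset.sum_congr rfl fun i hi => by rw [key i hi]; rfl
      _ = 0 := hs

private lemma hasWZS_of_long {n : ℕ} [NeZero n] {A : Set (ZMod n)} (hA : A.Nonempty)
    (x : Fin n → ZMod n) : HasWZS A x := by
  classical
  obtain ⟨a0, ha0⟩ := hA
  set g : Fin (n+1) → ZMod n :=
    fun k => ∑ i ∈ Finset.univ.filter (fun i : Fin n => (i : ℕ) < (k : ℕ)), a0 * x i with hg_def
  have hcard : Fintype.card (ZMod n) < Fintype.card (Fin (n+1)) := by
    simp [ZMod.card]
  obtain ⟨k, l, hkl, hg⟩ := Fintype.exists_ne_map_eq_of_card_lt g hcard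
  have hkl' : (k : ℕ) ≠ (l : ℕ) := fun hh => hkl (Fin.ext hh)
  wlog hlt : (k : ℕ) < (l : ℕ) generalizing k l
  · exact this l k hkl.symm hg.symm hkl'.symm (by omega)
  set I : Finset (Fin n) := Finset.univ.filter
    (fun i : Fin n => (k : ℕ) ≤ (i : ℕ) ∧ (i : ℕ) < (l : ℕ)) with hI_def
  have hkn : (k : ℕ) < n := by have := l.isLt; omega
  have hIne : I.Nonempty := ⟨⟨(k : ℕ), hkn⟩, by simp [hI_def, hlt]⟩
  have hsplit : Finset.univ.filter (fun i : Fin n => (i : ℕ) < (l : ℕ)) =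
      Finset.univ.filter (fun i : Fin n => (i : ℕ) < (k : ℕ)) ∪ I := by
    ext i
    simp only [Finset.mem_filter, Finset.mem_union, Finset.mem_univ, true_and, hI_def]
    omega
  have hdisj : Disjoint (Finset.univ.filter (fun i : Fin n => (i : ℕ) < (k : ℕ))) I := by
    rw [Finset.disjoint_left]
    intro i hi1 hi2
    simp only [Finset.mem_filter, Finset.mem_univ, true_and, hI_def] at hi1 hi2
    omega
  have hsum : g l = g k + ∑ i ∈ I, a0 * x i := by
    rw [hg_def]
    simp only
    rw [hsplit, Finset.sum_union hdisj]
  refine ⟨I, hIne, fun _ => a0, fun _ _ => ha0, ?_⟩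
  have h2 : g l = g l + ∑ i ∈ I, a0 * x i := by conv_lhs => rw [hsum, hg]
  exact (left_eq_add.mp h2)

private lemma davA_mem {n : ℕ} [NeZero n] {A : Set (ZMod n)} (hA : A.Nonempty) :
    0 < DavA n A ∧ ∀ x : Fin (DavA n A) → ZMod n, HasWZS A x :=
  Nat.sInf_mem (⟨n, Nat.pos_of_ne_zero (NeZero.ne n), fun x => hasWZS_of_long hA x⟩ :
    Set.Nonempty {ℓ : ℕ | 0 < ℓ ∧ ∀ x : Fin ℓ → ZMod n, HasWZS A x})

private lemma card_lt_davA {n : ℕ} [NeZero n] {A : Set (ZMod n)} (hA : A.Nonempty)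
    {ι : Type} [Fintype ι] {x : ι → ZMod n} (hx : ¬ HasWZS A x) :
    Fintype.card ι + 1 ≤ DavA n A := by
  by_contra hcon
  push_neg at hcon
  obtain ⟨hpos, hall⟩ := davA_mem (n := n) hA
  have hle : DavA n A ≤ Fintype.card ι := by omega
  have hf : Function.Injective
      (fun i : Fin (DavA n A) => (Fintype.equivFin ι).symm (Fin.castLE hle i)) :=
    (Fintype.equivFin ι).symm.injective.comp (Fin.castLE_injective hle)
  exact hx (hasWZS_comp _ hf (hall _))

private lemma exists_extremal {n : ℕ} [NeZero n] {A : Set (ZMod n)} (hA : A.Nonempty) :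
    ∃ x : Fin (DavA n A - 1) → ZMod n, ¬ HasWZS A x := by
  rcases Nat.eq_zero_or_pos (DavA n A - 1) with h0 | hpos
  · rw [h0]
    exact ⟨fun i => i.elim0, fun ⟨I, ⟨i, _⟩, _⟩ => i.elim0⟩
  · have hd1 := (davA_mem (n := n) hA).1
    have hrfl : DavA n A = sInf {ℓ : ℕ | 0 < ℓ ∧ ∀ x : Fin ℓ → ZMod n, HasWZS A x} := rfl
    have hnm : DavA n A - 1 ∉ {ℓ : ℕ | 0 < ℓ ∧ ∀ x : Fin ℓ → ZMod n, HasWZS A x} := by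
      rw [hrfl]
      exact Nat.notMem_of_lt_sInf (by omega)
    simp only [Set.mem_setOf_eq, not_and, not_forall] at hnm
    exact hnm hpos

theorem stmt4 (n n1 n2 : ℕ) (hn1 : 0 < n1) (hn2 : 0 < n2) (h : n = n1 * n2)
    (A : Set (ZMod n)) (A1 : Set (ZMod n1)) (A2 : Set (ZMod n2))
    (hA : A.Nonempty) (hA1 : A1.Nonempty) (hA2 : A2.Nonempty)
    (h1 : (ZMod.castHom ⟨n2, h⟩ (ZMod n1)) '' A ⊆ A1)
    (h2 : (ZMod.castHom ⟨n1, by rw [h, mul_comm]⟩ (ZMod n2)) '' A ⊆ A2) :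
    DavA n1 A1 + DavA n2 A2 - 1 ≤ DavA n A := by
  haveI : NeZero n1 := ⟨hn1.ne'⟩
  haveI : NeZero n2 := ⟨hn2.ne'⟩
  haveI : NeZero n := ⟨by rw [h]; exact (Nat.mul_pos hn1 hn2).ne'⟩
  set π1 : ZMod n →+* ZMod n1 := ZMod.castHom ⟨n2, h⟩ (ZMod n1) with hπ1_def
  set π2 : ZMod n →+* ZMod n2 := ZMod.castHom ⟨n1, by rw [h, mul_comm]⟩ (ZMod n2) with hπ2_def
  -- the embedding ZMod n2 →+ ZMod n, w ↦ n1 * w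
  have hker : (zmultiplesHom (ZMod n) ((n1 : ZMod n))) (n2 : ℤ) = 0 := by
    show (n2 : ℤ) • ((n1 : ℕ) : ZMod n) = 0
    rw [zsmul_eq_mul]
    push_cast
    rw [← Nat.cast_mul, mul_comm, ← h, ZMod.natCast_self]
  set ψ : ZMod n2 →+ ZMod n := ZMod.lift n2 ⟨zmultiplesHom (ZMod n) ((n1 : ZMod n)), hker⟩
    with hψ_def
  have hψcoe : ∀ k : ℤ, ψ (k : ZMod n2) = (k : ZMod n) * (n1 : ZMod n) := by
    intro k
    rw [hψ_def, ZMod.lift_coe]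
    show (k : ℤ) • ((n1 : ℕ) : ZMod n) = _
    rw [zsmul_eq_mul]
  have hψmul : ∀ (a : ZMod n) (w : ZMod n2), a * ψ w = ψ (π2 a * w) := by
    intro a w
    obtain ⟨j, rfl⟩ := ZMod.intCast_surjective a
    obtain ⟨k, rfl⟩ := ZMod.intCast_surjective w
    have hj : π2 ((j : ℤ) : ZMod n) = ((j : ℤ) : ZMod n2) := map_intCast π2 j
    rw [hj, ← Int.cast_mul, hψcoe, hψcoe]
    push_cast
    ring
  have hψinj : ∀ w : ZMod n2, ψ w = 0 → w = 0 := by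
    intro w hw
    obtain ⟨k, rfl⟩ := ZMod.intCast_surjective w
    rw [hψcoe] at hw
    rw [ZMod.intCast_zmod_eq_zero_iff_dvd]
    have hw' : ((k * n1 : ℤ) : ZMod n) = 0 := by push_cast; exact hw
    rw [ZMod.intCast_zmod_eq_zero_iff_dvd] at hw'
    obtain ⟨c, hc⟩ := hw'
    refine ⟨c, ?_⟩
    have hn1' : (n1 : ℤ) ≠ 0 := by exact_mod_cast hn1.ne'
    apply mul_right_cancel₀ hn1'
    rw [hc]
    have : (n : ℤ) = (n1 : ℤ) * n2 := by exact_mod_cast congrArg (Nat.cast : ℕ → ℤ) h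
    rw [this]; ring
  have hπ1ψ : ∀ w : ZMod n2, π1 (ψ w) = 0 := by
    intro w
    obtain ⟨k, rfl⟩ := ZMod.intCast_surjective w
    rw [hψcoe, map_mul, map_natCast, ZMod.natCast_self, mul_zero]
  obtain ⟨x1, hx1⟩ := exists_extremal (n := n1) hA1
  obtain ⟨x2, hx2⟩ := exists_extremal (n := n2) hA2
  set y : Fin (DavA n1 A1 - 1) → ZMod n := fun i => ((x1 i).val : ZMod n) with hy_def
  have hπ1y : ∀ i, π1 (y i) = x1 i := fun i => by
    rw [hy_def]; simp only [map_natCast, ZMod.natCast_zmod_val]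
  set x : Fin (DavA n1 A1 - 1) ⊕ Fin (DavA n2 A2 - 1) → ZMod n :=
    Sum.elim y (fun j => ψ (x2 j)) with hx_def
  have hx : ¬ HasWZS A x := by
    rintro ⟨I, hne, a, ha, hs⟩
    have hs' : ∑ i ∈ I.toLeft, a (Sum.inl i) * x (Sum.inl i)
        + ∑ j ∈ I.toRight, a (Sum.inr j) * x (Sum.inr j) = 0 := by
      rw [← Finset.toLeft_disjSum_toRight (u := I), Finset.sum_disjSum] at hs
      exact hs
    rcases I.toLeft.eq_empty_or_nonempty with hL | hL
    · -- right part nonempty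
      have hR : I.toRight.Nonempty := by
        obtain ⟨s, hsI⟩ := hne
        cases s with
        | inl t => exact absurd (Finset.mem_toLeft.mpr hsI) (by rw [hL]; simp)
        | inr t => exact ⟨t, Finset.mem_toRight.mpr hsI⟩
      rw [hL, Finset.sum_empty, zero_add] at hs'
      apply hx2
      refine ⟨I.toRight, hR, fun j => π2 (a (Sum.inr j)),
        fun j hj => h2 ⟨a (Sum.inr j), ha _ (Finset.mem_toRight.mp hj), rfl⟩, ?_⟩
      apply hψinj
      rw [map_sum]
      calc ∑ j ∈ I.toRight, ψ (π2 (a (Sum.inr j)) * x2 j)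
          = ∑ j ∈ I.toRight, a (Sum.inr j) * x (Sum.inr j) :=
            Finset.sum_congr rfl fun j _ => by rw [← hψmul]; rfl
        _ = 0 := hs'
    · apply hx1
      refine ⟨I.toLeft, hL, fun i => π1 (a (Sum.inl i)),
        fun i hi => h1 ⟨a (Sum.inl i), ha _ (Finset.mem_toLeft.mp hi), rfl⟩, ?_⟩
      have h0 : π1 (∑ i ∈ I.toLeft, a (Sum.inl i) * x (Sum.inl i)
          + ∑ j ∈ I.toRight, a (Sum.inr j) * x (Sum.inr j)) = 0 := by
        rw [hs']; exact map_zero _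
      rw [map_add, map_sum, map_sum] at h0
      have e1 : ∀ i ∈ I.toLeft, π1 (a (Sum.inl i) * x (Sum.inl i))
          = π1 (a (Sum.inl i)) * x1 i := fun i _ => by
        rw [map_mul]; congr 1; exact hπ1y i
      have e2 : ∀ j ∈ I.toRight, π1 (a (Sum.inr j) * x (Sum.inr j)) = 0 := fun j _ => by
        rw [map_mul]
        have : π1 (x (Sum.inr j)) = 0 := hπ1ψ (x2 j)
        rw [this, mul_zero]
      rw [Finset.sum_congr rfl e1, Finset.sum_congr rfl e2, Finset.sum_const_zero,
        add_zero] at h0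
      exact h0
  have hcard := card_lt_davA (n := n) hA hx
  rw [Fintype.card_sum, Fintype.card_fin, Fintype.card_fin] at hcard
  have hd1 := (davA_mem (n := n1) hA1).1
  have hd2 := (davA_mem (n := n2) hA2).1
  omega
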